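/- Let X be a k-dimensional simplicial complex on a finite vertex set V with Z_{k−1}(X;ℝ) ≠ {0}, let V = A_0 ⊔ … ⊔ A_k be a partition into nonempty parts, and let f ∈ C^{k−1}(X;ℝ) be the associated cochain (with the partition-adapted linear order on V). Then there exist unique z ∈ Z_{k−1}(X;ℝ) and b ∈ B^{k−1}(X;ℝ) with f = z + b, and λ(X)·⟨z,z⟩ ≤ |V|²·|F(A_0,…,A_k)|. -/

import Mathlib

open Finset

namespace HigherCheeger

variable {V : Type*} [DecidableEq V] [Fintype V] [LinearOrder V]

/-- An abstract simplicial complex: a family of finite subsets of `V`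
closed under taking subsets. -/
def IsComplex (X : Finset (Finset V)) : Prop :=
  ∀ σ ∈ X, ∀ τ ⊆ σ, τ ∈ X

/-- `X` is `k`-dimensional: every face has at most `k+1` vertices
and some face has exactly `k+1` vertices. -/
def IsDim (X : Finset (Finset V)) (k : ℕ) : Prop :=
  (∀ σ ∈ X, σ.card ≤ k + 1) ∧ ∃ σ ∈ X, σ.card = k + 1

/-- The faces of `X` of cardinality `c` (i.e. of dimension `c - 1`). -/
def faces (X : Finset (Finset V)) (c : ℕ) : Finset (Finset V) :=
  X.filter fun σ => σ.card = c

/-- `X` has complete `(k-1)`-skeleton: every subset of `V` of size at most `k` is a face. -/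
def CompleteSkeleton (X : Finset (Finset V)) (k : ℕ) : Prop :=
  ∀ σ : Finset V, σ.card ≤ k → σ ∈ X

/-- The `k`-dimensional completion `K(X)`. -/
def completion (X : Finset (Finset V)) (k : ℕ) : Finset (Finset V) :=
  X ∪ (Finset.univ.filter fun τ : Finset V => τ.card = k + 1 ∧ ∀ v ∈ τ, τ.erase v ∈ X)

/-- The complete `k`-dimensional complex `K_n^k` on the vertex set `V`. -/
def completeComplex (V : Type*) [DecidableEq V] [Fintype V] (k : ℕ) : Finset (Finset V) :=
  Finset.univ.filter fun σ : Finset V => σ.card ≤ k + 1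

/-- The oriented incidence number `[τ:σ]` (with respect to the linear order on `V`):
`(-1)^j` if `σ = τ \ {v_j}` where `v_j` is the `j`-th smallest vertex of `τ`, and `0` otherwise. -/
def incidence (τ σ : Finset V) : ℝ :=
  if σ ⊆ τ ∧ σ.card + 1 = τ.card then
    ∑ v ∈ τ \ σ, (-1 : ℝ) ^ (τ.filter fun w => w < v).card
  else 0

/-- The real coboundary operator `δ` applied to a cochain living on the faces of
cardinality `c`; the result lives on faces of cardinality `c + 1`. -/
def delta (X : Finset (Finset V)) (c : ℕ) (f : Finset V → ℝ) : Finset V → ℝ :=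
  fun τ => ∑ σ ∈ faces X c, incidence τ σ * f σ

/-- The real boundary operator `∂` (the adjoint of `δ`) applied to a cochain living
on the faces of cardinality `c`; the result lives on faces of cardinality `c - 1`. -/
def bdry (X : Finset (Finset V)) (c : ℕ) (f : Finset V → ℝ) : Finset V → ℝ :=
  fun σ => ∑ τ ∈ faces X c, incidence τ σ * f τ

/-- The inner product of two cochains on the faces of cardinality `c`. -/
def inn (X : Finset (Finset V)) (c : ℕ) (f g : Finset V → ℝ) : ℝ :=
  ∑ σ ∈ faces X c, f σ * g σ

/-- The upper Laplacian `L^up_{k-1} = ∂_k δ_{k-1}` acting on `(k-1)`-cochains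
(functions on faces of cardinality `k`). -/
def lapUp (X : Finset (Finset V)) (k : ℕ) (f : Finset V → ℝ) : Finset V → ℝ :=
  bdry X (k + 1) (delta X k f)

/-- The lower Laplacian `L^down_{k-1} = δ_{k-2} ∂_{k-1}` acting on `(k-1)`-cochains. -/
def lapDown (X : Finset (Finset V)) (k : ℕ) (f : Finset V → ℝ) : Finset V → ℝ :=
  delta X (k - 1) (bdry X k f)

/-- `f ∈ Z_{k-1}(X;ℝ) = ker ∂_{k-1}`. -/
def IsCycle (X : Finset (Finset V)) (k : ℕ) (f : Finset V → ℝ) : Prop :=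
  ∀ σ : Finset V, bdry X k f σ = 0

/-- `f ∈ B^{k-1}(X;ℝ) = im δ_{k-2}` (as a cochain, i.e. on the `(k-1)`-faces). -/
def IsCobdry (X : Finset (Finset V)) (k : ℕ) (f : Finset V → ℝ) : Prop :=
  ∃ g : Finset V → ℝ, ∀ σ ∈ faces X k, f σ = delta X (k - 1) g σ

/-- The spectral gap `λ(X)`: the minimum of the Rayleigh quotient
`⟨L^up_{k-1}(X) f, f⟩ / ⟨f, f⟩` over nonzero `f ∈ Z_{k-1}(X;ℝ)`. -/
noncomputable def spectralGap (X : Finset (Finset V)) (k : ℕ) : ℝ :=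
  sInf {r : ℝ | ∃ f : Finset V → ℝ, IsCycle X k f ∧ inn X k f f ≠ 0 ∧
    r = inn X k (lapUp X k f) f / inn X k f f}

/-- A partition of `V` into `m` (nonempty) parts. -/
def IsPartition {m : ℕ} (A : Fin m → Finset V) : Prop :=
  (∀ i, (A i).Nonempty) ∧ ∀ v : V, ∃! i, v ∈ A i

/-- The linear order on `V` is adapted to the family of parts `A`. -/
def OrderAdapted {m : ℕ} (A : Fin m → Finset V) : Prop :=
  ∀ i j : Fin m, i < j → ∀ v ∈ A i, ∀ w ∈ A j, v < w

/-- `F(A_0,…,A_k)`: the `k`-faces of `X` with exactly one vertex in each part. -/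
def Fset (X : Finset (Finset V)) (k : ℕ) (A : Fin (k + 1) → Finset V) : Finset (Finset V) :=
  (faces X (k + 1)).filter fun τ => ∀ i, (τ ∩ A i).card = 1

/-- `F^∂(A_0,…,A_k)`: the `(k+1)`-element members of `K(X)` with exactly one vertex
in each part. -/
def Fpar (X : Finset (Finset V)) (k : ℕ) (A : Fin (k + 1) → Finset V) : Finset (Finset V) :=
  (faces (completion X k) (k + 1)).filter fun τ => ∀ i, (τ ∩ A i).card = 1

/-- The value `|V|·|F(A_0,…,A_k)| / |F^∂(A_0,…,A_k)|` of a partition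
(`⊤` if the denominator is `0`). -/
noncomputable def cheegerVal (X : Finset (Finset V)) (k : ℕ) (A : Fin (k + 1) → Finset V) :
    EReal :=
  if (Fpar X k A).card = 0 then ⊤
  else (((Fintype.card V * (Fset X k A).card : ℝ) / ((Fpar X k A).card : ℝ) : ℝ) : EReal)

/-- The Cheeger constant `h(X)`. -/
noncomputable def cheeger (X : Finset (Finset V)) (k : ℕ) : EReal :=
  sInf {r : EReal | ∃ A : Fin (k + 1) → Finset V, IsPartition A ∧ r = cheegerVal X k A}

/-- `d(σ)`: the number of members of `F^∂(A_0,…,A_k)` containing `σ`. -/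
def degPar (X : Finset (Finset V)) (k : ℕ) (A : Fin (k + 1) → Finset V) (σ : Finset V) : ℕ :=
  ((Fpar X k A).filter fun τ => σ ⊆ τ).card

/-- `C(X)` (with respect to the partition `A`):
the maximum over `τ ∈ F^∂(A_0,…,A_k)` of `∑_{v ∈ τ} d(τ \ {v})`. -/
def Cconst (X : Finset (Finset V)) (k : ℕ) (A : Fin (k + 1) → Finset V) : ℕ :=
  (Fpar X k A).sup fun τ => ∑ v ∈ τ, degPar X k A (τ.erase v)

/-- The cochain associated to a partition `A`: `σ ↦ (-1)^l·|A_l|` if `A_l` is the unique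
part disjoint from `σ`, and `0` otherwise. -/
def assocCochain {k : ℕ} (A : Fin (k + 1) → Finset V) (σ : Finset V) : ℝ :=
  if (Finset.univ.filter fun l => σ ∩ A l = ∅).card = 1 then
    ∑ l ∈ Finset.univ.filter fun l => σ ∩ A l = ∅, (-1 : ℝ) ^ (l : ℕ) * ((A l).card : ℝ)
  else 0

/-- The `Z₂`-coboundary: a `(c-1)`-cochain `f` is sent to
`τ ↦ ∑_{v ∈ τ} f (τ \ {v})`. -/
def deltaZ2 (f : Finset V → ZMod 2) (τ : Finset V) : ZMod 2 :=
  ∑ v ∈ τ, f (τ.erase v)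

/-- The support of the `Z₂`-coboundary of `f` in `X`: the faces of `X` of cardinality
`k + 1` on which the `Z₂`-coboundary of `f` is nonzero.  Its cardinality is `|δ_X f|`. -/
def suppDelta (X : Finset (Finset V)) (k : ℕ) (f : Finset V → ZMod 2) : Finset (Finset V) :=
  (faces X (k + 1)).filter fun τ => deltaZ2 f τ ≠ 0

/-- `F(A_0,…,A_{k-1})`: the `(k-1)`-faces of `X` with exactly one vertex in each of
the `k` parts. -/
def FsetLow (X : Finset (Finset V)) (k : ℕ) (A : Fin k → Finset V) : Finset (Finset V) :=
  (faces X k).filter fun σ => ∀ i, (σ ∩ A i).card = 1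

/-- The Cheeger-type constant `h'(X)`. -/
noncomputable def cheeger' (X : Finset (Finset V)) (k : ℕ) : EReal :=
  sInf {r : EReal | ∃ (A : Fin k → Finset V) (f : Finset V → ZMod 2),
    IsPartition A ∧ (∀ σ, f σ ≠ 0 → σ ∈ FsetLow X k A) ∧
    r = if (suppDelta (completion X k) k f).card = 0 then (⊤ : EReal)
        else (((Fintype.card V * (suppDelta X k f).card : ℝ) /
              ((suppDelta (completion X k) k f).card : ℝ) : ℝ) : EReal)}

/-- The Hamming norm of a `Z₂`-cochain on the faces of cardinality `c`. -/
def hamming (X : Finset (Finset V)) (c : ℕ) (f : Finset V → ZMod 2) : ℕ :=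
  ((faces X c).filter fun σ => f σ ≠ 0).card

/-- `|[f]|`: the minimum Hamming norm of `f + δ_X g` over `g ∈ C^{k-2}(X;Z₂)`. -/
noncomputable def normClass (X : Finset (Finset V)) (k : ℕ) (f : Finset V → ZMod 2) : ℕ :=
  sInf {m : ℕ | ∃ g : Finset V → ZMod 2, m = hamming X k fun σ => f σ + deltaZ2 g σ}

/-- The coboundary expansion `φ(X) = min_f |δ_X f| / |[f]|` (quotients with denominator
`0` are `∞`). -/
noncomputable def phi (X : Finset (Finset V)) (k : ℕ) : EReal :=
  sInf {r : EReal | ∃ f : Finset V → ZMod 2,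
    r = if normClass X k f = 0 then (⊤ : EReal)
        else ((((suppDelta X k f).card : ℝ) / (normClass X k f : ℝ) : ℝ) : EReal)}

/-- `h̃(X) = min_f |V|·|δ_X f| / |δ_{K(X)} f|` (quotients with denominator `0` are `∞`). -/
noncomputable def htilde (X : Finset (Finset V)) (k : ℕ) : EReal :=
  sInf {r : EReal | ∃ f : Finset V → ZMod 2,
    r = if (suppDelta (completion X k) k f).card = 0 then (⊤ : EReal)
        else (((Fintype.card V * (suppDelta X k f).card : ℝ) /
              ((suppDelta (completion X k) k f).card : ℝ) : ℝ) : EReal)}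


/-! ### Auxiliary lemmas -/

set_option linter.unusedSectionVars false

section Aux

variable {X : Finset (Finset V)} {c k : ℕ}

lemma incidence_of_not {τ σ : Finset V} (h : ¬(σ ⊆ τ ∧ σ.card + 1 = τ.card)) :
    incidence τ σ = 0 := if_neg h

lemma incidence_erase {τ : Finset V} {v : V} (hv : v ∈ τ) :
    incidence τ (τ.erase v) = (-1 : ℝ) ^ (τ.filter fun w => w < v).card := by
  have h1 : 0 < τ.card := card_pos.mpr ⟨v, hv⟩
  rw [incidence, if_pos ⟨erase_subset _ _, by rw [card_erase_of_mem hv]; omega⟩,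
    Finset.sdiff_erase_self hv, Finset.sum_singleton]

lemma mem_faces {τ : Finset V} : τ ∈ faces X c ↔ τ ∈ X ∧ τ.card = c := by
  simp [faces]

lemma delta_congr {f g : Finset V → ℝ} (h : ∀ σ ∈ faces X c, f σ = g σ) (τ : Finset V) :
    delta X c f τ = delta X c g τ :=
  Finset.sum_congr rfl fun σ hσ => by rw [h σ hσ]

lemma bdry_congr {f g : Finset V → ℝ} (h : ∀ τ ∈ faces X c, f τ = g τ) (σ : Finset V) :
    bdry X c f σ = bdry X c g σ :=
  Finset.sum_congr rfl fun τ hτ => by rw [h τ hτ]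

lemma delta_eq_sum (hX : IsComplex X) {τ : Finset V} (hτ : τ ∈ X) (hc : τ.card = c + 1)
    (f : Finset V → ℝ) :
    delta X c f τ = ∑ v ∈ τ, (-1 : ℝ) ^ (τ.filter fun w => w < v).card * f (τ.erase v) := by
  have hsub : τ.image τ.erase ⊆ faces X c := by
    intro σ hσ
    obtain ⟨v, hv, rfl⟩ := Finset.mem_image.mp hσ
    exact mem_faces.mpr ⟨hX τ hτ _ (erase_subset _ _), by rw [card_erase_of_mem hv]; omega⟩
  rw [delta, ← Finset.sum_subset hsub]
  · rw [Finset.sum_image (fun u hu v hv h => Finset.erase_injOn τ hu hv h)]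
    refine Finset.sum_congr rfl fun v hv => ?_
    rw [incidence_erase hv]
  · intro σ hσ hσ'
    rw [incidence_of_not, zero_mul]
    rintro ⟨h1, h2⟩
    apply hσ'
    have hcd : (τ \ σ).card = 1 := by
      rw [card_sdiff_of_subset h1]; omega
    obtain ⟨v, hv⟩ := Finset.card_eq_one.mp hcd
    have hvτ : v ∈ τ := by
      have : v ∈ τ \ σ := hv ▸ Finset.mem_singleton_self v
      exact (Finset.mem_sdiff.mp this).1
    refine Finset.mem_image.mpr ⟨v, hvτ, ?_⟩
    have := Finset.sdiff_sdiff_eq_self h1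
    rw [hv] at this
    rw [← this, Finset.erase_eq]

lemma isCycle_of_faces (hX : IsComplex X) {f : Finset V → ℝ}
    (h : ∀ σ ∈ faces X (k - 1), bdry X k f σ = 0) : IsCycle X k f := by
  intro σ
  by_cases hσ : σ ∈ faces X (k - 1)
  · exact h σ hσ
  · refine Finset.sum_eq_zero fun τ hτ => ?_
    rw [incidence_of_not, zero_mul]
    rintro ⟨h1, h2⟩
    obtain ⟨hτX, hτc⟩ := mem_faces.mp hτ
    exact hσ (mem_faces.mpr ⟨hX τ hτX σ h1, by omega⟩)

lemma inn_delta_eq (X : Finset (Finset V)) (c k : ℕ) (h u : Finset V → ℝ) :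
    inn X k (delta X c h) u = ∑ σ ∈ faces X c, h σ * bdry X k u σ := by
  unfold inn delta bdry
  calc ∑ τ ∈ faces X k, (∑ σ ∈ faces X c, incidence τ σ * h σ) * u τ
      = ∑ τ ∈ faces X k, ∑ σ ∈ faces X c, h σ * (incidence τ σ * u τ) := by
        refine Finset.sum_congr rfl fun τ _ => ?_
        rw [Finset.sum_mul]
        exact Finset.sum_congr rfl fun σ _ => by ring
    _ = ∑ σ ∈ faces X c, ∑ τ ∈ faces X k, h σ * (incidence τ σ * u τ) := Finset.sum_comm
    _ = ∑ σ ∈ faces X c, h σ * ∑ τ ∈ faces X k, incidence τ σ * u τ := by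
        refine Finset.sum_congr rfl fun σ _ => ?_
        rw [Finset.mul_sum]

lemma inn_bdry_eq (X : Finset (Finset V)) (c k : ℕ) (w u : Finset V → ℝ) :
    inn X k (bdry X c w) u = ∑ τ ∈ faces X c, w τ * delta X k u τ := by
  unfold inn delta bdry
  calc ∑ σ ∈ faces X k, (∑ τ ∈ faces X c, incidence τ σ * w τ) * u σ
      = ∑ σ ∈ faces X k, ∑ τ ∈ faces X c, w τ * (incidence τ σ * u σ) := by
        refine Finset.sum_congr rfl fun σ _ => ?_
        rw [Finset.sum_mul]
        exact Finset.sum_congr rfl fun τ _ => by ring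
    _ = ∑ τ ∈ faces X c, ∑ σ ∈ faces X k, w τ * (incidence τ σ * u σ) := Finset.sum_comm
    _ = ∑ τ ∈ faces X c, w τ * ∑ σ ∈ faces X k, incidence τ σ * u σ := by
        refine Finset.sum_congr rfl fun τ _ => ?_
        rw [Finset.mul_sum]

lemma inn_self_nonneg (X : Finset (Finset V)) (c : ℕ) (u : Finset V → ℝ) :
    0 ≤ inn X c u u :=
  Finset.sum_nonneg fun _ _ => mul_self_nonneg _

lemma neg_one_pow_filter_erase (τ : Finset V) (v w : V) :
    (-1 : ℝ) ^ ((τ.erase v).filter fun x => x < w).card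
      = (if v ∈ τ ∧ v < w then -1 else 1) * (-1 : ℝ) ^ (τ.filter fun x => x < w).card := by
  rw [Finset.filter_erase]
  by_cases h : v ∈ τ.filter fun x => x < w
  · have hmem := Finset.mem_filter.mp h
    rw [if_pos ⟨hmem.1, hmem.2⟩, Finset.card_erase_of_mem h]
    have h1 : 0 < (τ.filter fun x => x < w).card := card_pos.mpr ⟨v, h⟩
    have h2 : (-1 : ℝ) ^ (τ.filter fun x => x < w).card
        = (-1 : ℝ) ^ ((τ.filter fun x => x < w).card - 1) * (-1) := by
      rw [← pow_succ]; congr 1; omega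
    rw [h2]; ring
  · rw [Finset.erase_eq_of_notMem h, if_neg (by simpa [Finset.mem_filter] using h)]
    ring

lemma delta_delta_zero (hX : IsComplex X) {τ : Finset V} (hτ : τ ∈ X) (hc : τ.card = k + 1)
    (g : Finset V → ℝ) : delta X k (delta X (k - 1) g) τ = 0 := by
  rw [delta_eq_sum hX hτ hc]
  rcases Nat.eq_zero_or_pos k with hk | hk
  · refine Finset.sum_eq_zero fun v hv => ?_
    have : delta X (k - 1) g (τ.erase v) = 0 := by
      refine Finset.sum_eq_zero fun ρ hρ => ?_
      rw [incidence_of_not, zero_mul]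
      rintro ⟨-, h2⟩
      obtain ⟨-, hρc⟩ := mem_faces.mp hρ
      have : (τ.erase v).card = 0 := by
        rw [card_erase_of_mem hv]; omega
      omega
    rw [this, mul_zero]
  -- now k ≥ 1
  have herase : ∀ v ∈ τ, delta X (k - 1) g (τ.erase v)
      = ∑ w ∈ τ.erase v, (-1 : ℝ) ^ ((τ.erase v).filter fun x => x < w).card
          * g ((τ.erase v).erase w) := by
    intro v hv
    refine delta_eq_sum hX (hX τ hτ _ (erase_subset _ _)) ?_ g
    rw [card_erase_of_mem hv]; omega
  -- T' as a function on pairs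
  set T : V → V → ℝ := fun v w =>
    if w = v ∨ v ∉ τ ∨ w ∉ τ then 0 else
      (-1 : ℝ) ^ (τ.filter fun x => x < v).card
        * ((-1 : ℝ) ^ ((τ.erase v).filter fun x => x < w).card * g ((τ.erase v).erase w))
    with hT
  have hstep : ∀ v ∈ τ, (-1 : ℝ) ^ (τ.filter fun x => x < v).card
      * delta X (k - 1) g (τ.erase v) = ∑ w ∈ τ, T v w := by
    intro v hv
    rw [herase v hv, Finset.mul_sum]
    rw [← Finset.add_sum_erase τ (fun w => T v w) hv]
    have hTvv : T v v = 0 := by simp [hT]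
    rw [hTvv, zero_add]
    refine Finset.sum_congr rfl fun w hw => ?_
    have hwv := Finset.mem_erase.mp hw
    rw [hT]
    simp only [hwv.1, hwv.2, hv, not_true, or_false, if_false]
  calc ∑ v ∈ τ, (-1 : ℝ) ^ (τ.filter fun x => x < v).card * delta X (k - 1) g (τ.erase v)
      = ∑ v ∈ τ, ∑ w ∈ τ, T v w := Finset.sum_congr rfl hstep
    _ = ∑ p ∈ τ ×ˢ τ, T p.1 p.2 := (Finset.sum_product' τ τ fun v w => T v w).symm
    _ = 0 := ?_
  refine Finset.sum_involution (fun p _ => p.swap) ?_ ?_ ?_ ?_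
  · rintro ⟨v, w⟩ hp
    show T v w + T w v = 0
    by_cases hvw : w = v
    · subst hvw; simp [hT]
    have hv : v ∈ τ := (Finset.mem_product.mp hp).1
    have hw : w ∈ τ := (Finset.mem_product.mp hp).2
    have hkey : T v w = - T w v := by
      rw [hT]
      simp only [hvw, Ne.symm hvw, hv, hw, not_true, or_false, if_false, false_or]
      rw [neg_one_pow_filter_erase τ v w, neg_one_pow_filter_erase τ w v,
        Finset.erase_right_comm (a := v) (b := w)]
      rcases lt_or_gt_of_ne (fun h => hvw h.symm) with h | h
      · rw [if_pos ⟨hv, h⟩, if_neg (by simp [not_lt_of_gt h])]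
        ring
      · rw [if_neg (by simp [not_lt_of_gt h]), if_pos ⟨hw, h⟩]
        ring
    rw [hkey]; ring
  · rintro ⟨v, w⟩ hp hne
    intro hh
    apply hne
    have hwv : w = v := congrArg Prod.fst hh
    simp [hT, hwv]
  · rintro ⟨v, w⟩ hp
    rw [Finset.mem_product] at *
    exact ⟨hp.2, hp.1⟩
  · rintro ⟨v, w⟩ _
    rfl

lemma sum_eq_card_all_one {ι : Type*} {s : Finset ι} {c : ι → ℕ} (h1 : ∀ i ∈ s, 1 ≤ c i)
    (h2 : ∑ i ∈ s, c i = s.card) : ∀ i ∈ s, c i = 1 := by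
  by_contra hcon
  push_neg at hcon
  obtain ⟨i, hi, hne⟩ := hcon
  have hlt : ∑ j ∈ s, (1 : ℕ) < ∑ j ∈ s, c j :=
    Finset.sum_lt_sum h1 ⟨i, hi, by have := h1 i hi; omega⟩
  rw [Finset.sum_const, smul_eq_mul, mul_one, h2] at hlt
  omega

lemma sum_eq_card_succ {ι : Type*} [DecidableEq ι] {s : Finset ι} {c : ι → ℕ}
    (h1 : ∀ i ∈ s, 1 ≤ c i) (h2 : ∑ i ∈ s, c i = s.card + 1) :
    ∃ m ∈ s, c m = 2 ∧ ∀ j ∈ s, j ≠ m → c j = 1 := by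
  have hex : ∃ m ∈ s, 2 ≤ c m := by
    by_contra hcon
    push_neg at hcon
    have : ∑ i ∈ s, c i ≤ ∑ i ∈ s, (1 : ℕ) :=
      Finset.sum_le_sum fun i hi => by have := hcon i hi; omega
    rw [Finset.sum_const, smul_eq_mul, mul_one] at this
    omega
  obtain ⟨m, hm, hm2⟩ := hex
  have hpos : 0 < s.card := Finset.card_pos.mpr ⟨m, hm⟩
  have hsplit := Finset.add_sum_erase s c hm
  have hcard_erase : (s.erase m).card = s.card - 1 := Finset.card_erase_of_mem hm
  have hge : (s.erase m).card ≤ ∑ j ∈ s.erase m, c j := by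
    calc (s.erase m).card = ∑ j ∈ s.erase m, (1 : ℕ) := by
          rw [Finset.sum_const, smul_eq_mul, mul_one]
      _ ≤ ∑ j ∈ s.erase m, c j :=
          Finset.sum_le_sum fun j hj => h1 j (Finset.mem_of_mem_erase hj)
  have hcm : c m = 2 := by omega
  refine ⟨m, hm, hcm, ?_⟩
  have hall := sum_eq_card_all_one (s := s.erase m) (c := c)
    (fun j hj => h1 j (Finset.mem_of_mem_erase hj)) (by omega)
  intro j hj hjm
  exact hall j (Finset.mem_erase.mpr ⟨hjm, hj⟩)

variable {A : Fin (k + 1) → Finset V}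

lemma assoc_apply_of_unique {σ : Finset V} {l : Fin (k + 1)}
    (h : (Finset.univ.filter fun i => σ ∩ A i = ∅) = {l}) :
    assocCochain A σ = (-1 : ℝ) ^ (l : ℕ) * ((A l).card : ℝ) := by
  rw [assocCochain, h]
  simp

lemma assoc_eq_zero_of_two {σ : Finset V} {i j : Fin (k + 1)} (hij : i ≠ j)
    (hi : σ ∩ A i = ∅) (hj : σ ∩ A j = ∅) : assocCochain A σ = 0 := by
  rw [assocCochain, if_neg]
  intro h
  have hsub : ({i, j} : Finset (Fin (k + 1))) ⊆ Finset.univ.filter fun l => σ ∩ A l = ∅ := by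
    intro x hx
    rcases Finset.mem_insert.mp hx with rfl | hx
    · exact Finset.mem_filter.mpr ⟨Finset.mem_univ _, hi⟩
    · rw [Finset.mem_singleton.mp hx]
      exact Finset.mem_filter.mpr ⟨Finset.mem_univ _, hj⟩
  have := Finset.card_le_card hsub
  rw [Finset.card_pair hij, h] at this
  omega

lemma sum_card_inter (hA : IsPartition A) (τ : Finset V) :
    ∑ i, (τ ∩ A i).card = τ.card := by
  have hfil : ∀ i, τ ∩ A i = τ.filter (· ∈ A i) := fun i => by
    ext x; simp [Finset.mem_inter, Finset.mem_filter]
  calc ∑ i, (τ ∩ A i).card = ∑ i, ∑ v ∈ τ, if v ∈ A i then 1 else 0 := by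
        refine Finset.sum_congr rfl fun i _ => ?_
        rw [hfil i, Finset.card_filter]
    _ = ∑ v ∈ τ, ∑ i, if v ∈ A i then 1 else 0 := Finset.sum_comm
    _ = ∑ v ∈ τ, 1 := by
        refine Finset.sum_congr rfl fun v _ => ?_
        obtain ⟨pt, hpt, hptu⟩ := hA.2 v
        have hset : (Finset.univ.filter fun i => v ∈ A i) = {pt} := by
          ext i
          simp only [Finset.mem_filter, Finset.mem_univ, true_and, Finset.mem_singleton]
          exact ⟨fun h => hptu i h, fun h => h ▸ hpt⟩
        rw [← Finset.card_filter, hset, Finset.card_singleton]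
    _ = τ.card := by simp

lemma card_V_eq (hA : IsPartition A) : Fintype.card V = ∑ i, (A i).card := by
  have := sum_card_inter hA (Finset.univ : Finset V)
  simp only [Finset.univ_inter, Finset.card_univ] at this
  exact this.symm

lemma assoc_sum_bound (hA : IsPartition A) {τ : Finset V}
    (hone : ∀ i, (τ ∩ A i).card = 1) :
    |∑ v ∈ τ, (-1 : ℝ) ^ (τ.filter fun w => w < v).card * assocCochain A (τ.erase v)|
      ≤ (Fintype.card V : ℝ) := by
  choose pt hpt hptu using hA.2
  have hval : ∀ v ∈ τ, assocCochain A (τ.erase v)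
      = (-1 : ℝ) ^ (pt v : ℕ) * ((A (pt v)).card : ℝ) := by
    intro v hv
    apply assoc_apply_of_unique
    ext i
    simp only [Finset.mem_filter, Finset.mem_univ, true_and, Finset.mem_singleton]
    rw [Finset.erase_inter]
    constructor
    · intro h
      by_contra hne'
      have hvA : v ∉ A i := fun hm => hne' (hptu v i hm)
      have hvi : v ∉ τ ∩ A i := fun hm => hvA (Finset.mem_inter.mp hm).2
      rw [Finset.erase_eq_of_notMem hvi] at h
      have := hone i
      rw [h] at this
      simp at this
    · rintro rfl
      have hv' : v ∈ τ ∩ A (pt v) := Finset.mem_inter.mpr ⟨hv, hpt v⟩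
      obtain ⟨a, ha⟩ := Finset.card_eq_one.mp (hone (pt v))
      rw [ha] at hv' ⊢
      rw [← Finset.mem_singleton.mp hv', Finset.erase_singleton]
  calc |∑ v ∈ τ, (-1 : ℝ) ^ (τ.filter fun w => w < v).card * assocCochain A (τ.erase v)|
      ≤ ∑ v ∈ τ, |(-1 : ℝ) ^ (τ.filter fun w => w < v).card * assocCochain A (τ.erase v)| :=
        Finset.abs_sum_le_sum_abs _ _
    _ = ∑ v ∈ τ, ((A (pt v)).card : ℝ) := by
        refine Finset.sum_congr rfl fun v hv => ?_
        rw [hval v hv]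
        simp [abs_mul, abs_pow, Nat.abs_cast]
    _ = ∑ i, ∑ v ∈ τ.filter fun v => pt v = i, ((A (pt v)).card : ℝ) :=
        (Finset.sum_fiberwise τ pt _).symm
    _ = ∑ i, ((A i).card : ℝ) := by
        refine Finset.sum_congr rfl fun i _ => ?_
        have hfil : τ.filter (fun v => pt v = i) = τ ∩ A i := by
          ext x
          simp only [Finset.mem_filter, Finset.mem_inter]
          exact ⟨fun ⟨h1, h2⟩ => ⟨h1, h2 ▸ hpt x⟩, fun ⟨h1, h2⟩ => ⟨h1, (hptu x i h2).symm⟩⟩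
        have hstep : ∑ v ∈ τ.filter (fun v => pt v = i), ((A (pt v)).card : ℝ)
            = ∑ v ∈ τ.filter (fun v => pt v = i), ((A i).card : ℝ) :=
          Finset.sum_congr rfl fun v hv => by rw [(Finset.mem_filter.mp hv).2]
        rw [hstep, Finset.sum_const, hfil, hone i, one_smul]
    _ = (Fintype.card V : ℝ) := by
        rw [card_V_eq hA]
        push_cast
        ring

lemma assoc_sum_zero (hA : IsPartition A) (hord : OrderAdapted A) {τ : Finset V}
    (hc : τ.card = k + 1) (hne : ¬ ∀ i, (τ ∩ A i).card = 1) :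
    ∑ v ∈ τ, (-1 : ℝ) ^ (τ.filter fun w => w < v).card * assocCochain A (τ.erase v) = 0 := by
  choose pt hpt hptu using hA.2
  set E := Finset.univ.filter (fun i : Fin (k + 1) => τ ∩ A i = ∅) with hE
  have hsum := sum_card_inter hA τ
  rcases lt_trichotomy E.card 1 with h0 | h1 | h2
  · -- no empty part: contradiction with hne
    have h0' : E = ∅ := Finset.card_eq_zero.mp (by omega)
    exfalso
    apply hne
    intro i
    refine sum_eq_card_all_one (s := Finset.univ) (c := fun j => (τ ∩ A j).card)
      (fun j _ => ?_) ?_ i (Finset.mem_univ i)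
    · have hne2 : τ ∩ A j ≠ ∅ := by
        intro hcon
        have : j ∈ E := Finset.mem_filter.mpr ⟨Finset.mem_univ _, hcon⟩
        rw [h0'] at this
        exact absurd this (Finset.notMem_empty _)
      exact Finset.card_pos.mpr (Finset.nonempty_iff_ne_empty.mpr hne2)
    · rw [hsum, hc, Finset.card_univ, Fintype.card_fin]
  · -- exactly one empty part
    obtain ⟨i₀, hi₀⟩ := Finset.card_eq_one.mp h1
    have hi₀E : τ ∩ A i₀ = ∅ := by
      have : i₀ ∈ E := hi₀ ▸ Finset.mem_singleton_self _
      exact (Finset.mem_filter.mp this).2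
    have hnotE : ∀ i, i ≠ i₀ → τ ∩ A i ≠ ∅ := by
      intro i hne' hcon
      have : i ∈ E := Finset.mem_filter.mpr ⟨Finset.mem_univ _, hcon⟩
      rw [hi₀] at this
      exact hne' (Finset.mem_singleton.mp this)
    have hs1 : ∀ i ∈ Finset.univ.erase i₀, 1 ≤ (τ ∩ A i).card := fun i hi =>
      Finset.card_pos.mpr (Finset.nonempty_iff_ne_empty.mpr (hnotE i (Finset.mem_erase.mp hi).1))
    have hs2 : ∑ i ∈ Finset.univ.erase i₀, (τ ∩ A i).card = (Finset.univ.erase i₀).card + 1 := by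
      have hsplit := Finset.add_sum_erase Finset.univ (fun i => (τ ∩ A i).card)
        (Finset.mem_univ i₀)
      simp only [hi₀E, Finset.card_empty, zero_add] at hsplit
      rw [Finset.card_erase_of_mem (Finset.mem_univ _), Finset.card_univ, Fintype.card_fin]
      omega
    obtain ⟨m, hm, hm2, hmone⟩ := sum_eq_card_succ hs1 hs2
    have hmi₀ : m ≠ i₀ := (Finset.mem_erase.mp hm).1
    obtain ⟨a, b, hab, hpair'⟩ := Finset.card_eq_two.mp hm2
    have key : ∀ u w : V, u < w → τ ∩ A m = {u, w} →
        ∑ v ∈ τ, (-1 : ℝ) ^ (τ.filter fun x => x < v).card * assocCochain A (τ.erase v) = 0 := by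
      intro u w huw hpair
      have huτ : u ∈ τ ∧ u ∈ A m := by
        have : u ∈ τ ∩ A m := hpair ▸ Finset.mem_insert_self u {w}
        exact ⟨(Finset.mem_inter.mp this).1, (Finset.mem_inter.mp this).2⟩
      have hwτ : w ∈ τ ∧ w ∈ A m := by
        have : w ∈ τ ∩ A m := hpair ▸ Finset.mem_insert_of_mem (Finset.mem_singleton_self w)
        exact ⟨(Finset.mem_inter.mp this).1, (Finset.mem_inter.mp this).2⟩
      have hval : ∀ v ∈ τ, v ∈ A m →
          assocCochain A (τ.erase v) = (-1 : ℝ) ^ (i₀ : ℕ) * ((A i₀).card : ℝ) := by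
        intro v hv hvm
        apply assoc_apply_of_unique
        ext i
        simp only [Finset.mem_filter, Finset.mem_univ, true_and, Finset.mem_singleton]
        rw [Finset.erase_inter]
        constructor
        · intro h
          by_contra hii
          have hne2 : τ ∩ A i ≠ ∅ := hnotE i hii
          have hsub : τ ∩ A i ⊆ {v} := by
            intro x hx
            by_contra hxv
            have hxmem : x ∈ (τ ∩ A i).erase v :=
              Finset.mem_erase.mpr ⟨by simpa using hxv, hx⟩
            rw [h] at hxmem
            exact absurd hxmem (Finset.notMem_empty _)
          have hvAi : v ∈ A i := by
            obtain ⟨x, hx⟩ := Finset.nonempty_iff_ne_empty.mpr hne2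
            have hxv : x = v := Finset.mem_singleton.mp (hsub hx)
            rw [hxv] at hx
            exact (Finset.mem_inter.mp hx).2
          have him : i = m := by rw [hptu v i hvAi, ← hptu v m hvm]
          rw [him, hpair] at h
          have hcard := congrArg Finset.card h
          rw [Finset.card_empty] at hcard
          have hge := Finset.pred_card_le_card_erase (s := ({u, w} : Finset V)) (a := v)
          rw [Finset.card_pair huw.ne] at hge
          omega
        · rintro rfl
          rw [hi₀E, Finset.erase_empty]
      have hzero : ∀ v ∈ τ, v ∉ ({u, w} : Finset V) → assocCochain A (τ.erase v) = 0 := by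
        intro v hv hvuw
        have hptv : pt v ≠ i₀ := by
          intro h
          have : v ∈ τ ∩ A (pt v) := Finset.mem_inter.mpr ⟨hv, hpt v⟩
          rw [h, hi₀E] at this
          exact absurd this (Finset.notMem_empty _)
        have hptvm : pt v ≠ m := by
          intro h
          have : v ∈ τ ∩ A m := Finset.mem_inter.mpr ⟨hv, h ▸ hpt v⟩
          rw [hpair] at this
          exact hvuw this
        refine assoc_eq_zero_of_two (i := i₀) (j := pt v) (Ne.symm hptv) ?_ ?_
        · rw [Finset.erase_inter, hi₀E, Finset.erase_empty]
        · rw [Finset.erase_inter]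
          have hone' := hmone (pt v) (Finset.mem_erase.mpr ⟨hptv, Finset.mem_univ _⟩) hptvm
          have hv' : v ∈ τ ∩ A (pt v) := Finset.mem_inter.mpr ⟨hv, hpt v⟩
          obtain ⟨x, hx⟩ := Finset.card_eq_one.mp hone'
          rw [hx] at hv' ⊢
          rw [← Finset.mem_singleton.mp hv', Finset.erase_singleton]
      have hsub : ({u, w} : Finset V) ⊆ τ := by
        rw [← hpair]
        exact Finset.inter_subset_left
      rw [← Finset.sum_subset hsub (fun v hv hvn => by rw [hzero v hv hvn, mul_zero])]
      rw [Finset.sum_pair huw.ne]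
      have hfil : τ.filter (fun x => x < w) = insert u (τ.filter fun x => x < u) := by
        ext x
        simp only [Finset.mem_filter, Finset.mem_insert]
        constructor
        · rintro ⟨hxτ, hxw⟩
          by_cases hxu : x = u
          · exact Or.inl hxu
          right
          refine ⟨hxτ, ?_⟩
          by_contra hxu'
          have hux : u < x := lt_of_le_of_ne (not_lt.mp hxu') fun h => hxu h.symm
          rcases lt_trichotomy (pt x) m with hpm | hpm | hpm
          · exact absurd (hord (pt x) m hpm x (hpt x) u huτ.2) (not_lt.mpr hux.le)
          · have hxm : x ∈ τ ∩ A m := Finset.mem_inter.mpr ⟨hxτ, hpm ▸ hpt x⟩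
            rw [hpair] at hxm
            rcases Finset.mem_insert.mp hxm with h' | h'
            · exact hxu h'
            · rw [Finset.mem_singleton.mp h'] at hxw
              exact absurd hxw (lt_irrefl w)
          · exact absurd (hord m (pt x) hpm w hwτ.2 x (hpt x)) (not_lt.mpr hxw.le)
        · rintro (rfl | ⟨hxτ, hxu⟩)
          · exact ⟨huτ.1, huw⟩
          · exact ⟨hxτ, hxu.trans huw⟩
      have hu_not : u ∉ τ.filter (fun x => x < u) :=
        fun h => absurd (Finset.mem_filter.mp h).2 (lt_irrefl u)
      have hcard2 : (τ.filter fun x => x < w).card = (τ.filter fun x => x < u).card + 1 := by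
        rw [hfil, Finset.card_insert_of_notMem hu_not]
      rw [hval u huτ.1 huτ.2, hval w hwτ.1 hwτ.2, hcard2, pow_succ]
      ring
    rcases hab.lt_or_gt with h | h
    · exact key a b h hpair'
    · refine key b a h ?_
      rw [Finset.pair_comm] at hpair'
      exact hpair'
  · -- at least two empty parts
    obtain ⟨i, hiE, j, hjE, hij⟩ := Finset.one_lt_card.mp h2
    refine Finset.sum_eq_zero fun v hv => ?_
    rw [assoc_eq_zero_of_two hij ?_ ?_, mul_zero]
    · rw [Finset.erase_inter, (Finset.mem_filter.mp hiE).2, Finset.erase_empty]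
    · rw [Finset.erase_inter, (Finset.mem_filter.mp hjE).2, Finset.erase_empty]

end Aux

section LinAlg

set_option linter.unusedSectionVars false

/-- Extension of a cochain defined on a finite set of faces by zero. -/
noncomputable def ext (S : Finset (Finset V)) (u : EuclideanSpace ℝ ↥S) : Finset V → ℝ :=
  fun σ => if h : σ ∈ S then u ⟨σ, h⟩ else 0

lemma ext_apply_of_mem (S : Finset (Finset V)) (u : EuclideanSpace ℝ ↥S) {σ : Finset V}
    (h : σ ∈ S) : ext S u σ = u ⟨σ, h⟩ := dif_pos h

lemma ext_add (S : Finset (Finset V)) (u v : EuclideanSpace ℝ ↥S) :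
    ext S (u + v) = fun σ => ext S u σ + ext S v σ := by
  funext σ
  by_cases h : σ ∈ S
  · simp only [ext, dif_pos h]
    rfl
  · simp only [ext, dif_neg h, add_zero]

lemma ext_smul (S : Finset (Finset V)) (c : ℝ) (u : EuclideanSpace ℝ ↥S) :
    ext S (c • u) = fun σ => c * ext S u σ := by
  funext σ
  by_cases h : σ ∈ S
  · simp only [ext, dif_pos h]
    rfl
  · simp only [ext, dif_neg h, mul_zero]

/-- The coboundary `δ_{k-2}` as a linear map between Euclidean spaces. -/
noncomputable def Dmap (X : Finset (Finset V)) (k : ℕ) :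
    EuclideanSpace ℝ ↥(faces X (k - 1)) →ₗ[ℝ] EuclideanSpace ℝ ↥(faces X k) where
  toFun g := WithLp.toLp 2 (fun τ : ↥(faces X k) => delta X (k - 1) (ext (faces X (k - 1)) g) τ.1)
  map_add' g h := by
    apply WithLp.ofLp_injective 2
    funext τ
    show delta X (k - 1) (ext (faces X (k - 1)) (g + h)) τ.1
        = delta X (k - 1) (ext (faces X (k - 1)) g) τ.1
          + delta X (k - 1) (ext (faces X (k - 1)) h) τ.1
    rw [ext_add]
    unfold delta
    rw [← Finset.sum_add_distrib]
    exact Finset.sum_congr rfl fun σ _ => by ring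
  map_smul' c g := by
    apply WithLp.ofLp_injective 2
    funext τ
    show delta X (k - 1) (ext (faces X (k - 1)) (c • g)) τ.1
        = c * delta X (k - 1) (ext (faces X (k - 1)) g) τ.1
    rw [ext_smul]
    unfold delta
    rw [Finset.mul_sum]
    exact Finset.sum_congr rfl fun σ _ => by ring

lemma inner_ext (S : Finset (Finset V)) (u v : EuclideanSpace ℝ ↥S) :
    (inner ℝ u v : ℝ) = ∑ σ ∈ S, ext S u σ * ext S v σ := by
  calc (inner ℝ u v : ℝ) = ∑ i : ↥S, u i * v i := by
        rw [PiLp.inner_apply]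
        exact Finset.sum_congr rfl fun i _ => by
          simp [RCLike.inner_apply, conj_trivial, mul_comm]
    _ = ∑ i ∈ S.attach, ext S u ↑i * ext S v ↑i := by
        rw [Finset.univ_eq_attach]
        refine Finset.sum_congr rfl fun i _ => ?_
        rw [ext_apply_of_mem S u i.2, ext_apply_of_mem S v i.2]
    _ = ∑ σ ∈ S, ext S u σ * ext S v σ :=
        Finset.sum_attach S fun σ => ext S u σ * ext S v σ

lemma inner_D_eq (X : Finset (Finset V)) (k : ℕ) (g : EuclideanSpace ℝ ↥(faces X (k - 1)))
    (u : EuclideanSpace ℝ ↥(faces X k)) :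
    (inner ℝ (Dmap X k g) u : ℝ)
      = ∑ σ ∈ faces X (k - 1), ext (faces X (k - 1)) g σ * bdry X k (ext (faces X k) u) σ := by
  rw [inner_ext]
  calc ∑ τ ∈ faces X k, ext (faces X k) (Dmap X k g) τ * ext (faces X k) u τ
      = inn X k (delta X (k - 1) (ext (faces X (k - 1)) g)) (ext (faces X k) u) := by
        refine Finset.sum_congr rfl fun τ hτ => ?_
        rw [ext_apply_of_mem _ _ hτ]
        rfl
    _ = _ := inn_delta_eq X (k - 1) k _ _

lemma mem_orthD_iff {X : Finset (Finset V)} {k : ℕ} (hX : IsComplex X)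
    (u : EuclideanSpace ℝ ↥(faces X k)) :
    u ∈ (LinearMap.range (Dmap X k))ᗮ ↔ IsCycle X k (ext (faces X k) u) := by
  rw [Submodule.mem_orthogonal]
  constructor
  · intro h
    apply isCycle_of_faces hX
    intro σ hσ
    have h1 := h (Dmap X k (EuclideanSpace.single ⟨σ, hσ⟩ 1)) ⟨_, rfl⟩
    rw [inner_D_eq] at h1
    have hsum : ∑ ρ ∈ faces X (k - 1),
        ext (faces X (k - 1)) (EuclideanSpace.single ⟨σ, hσ⟩ (1 : ℝ)) ρ
          * bdry X k (ext (faces X k) u) ρ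
        = bdry X k (ext (faces X k) u) σ := by
      rw [Finset.sum_eq_single_of_mem σ hσ]
      · rw [ext_apply_of_mem _ _ hσ, EuclideanSpace.single_apply, if_pos rfl, one_mul]
      · intro ρ hρ hne
        rw [ext_apply_of_mem _ _ hρ, EuclideanSpace.single_apply, if_neg, zero_mul]
        exact fun hc => hne (congrArg Subtype.val hc)
    rw [hsum] at h1
    exact h1
  · intro h w hw
    obtain ⟨g, rfl⟩ := hw
    rw [inner_D_eq]
    exact Finset.sum_eq_zero fun ρ _ => by rw [h ρ, mul_zero]

end LinAlg

/-- **Lemma 2.1.**  Let `X` be a `k`-dimensional complex with `Z_{k-1}(X;ℝ) ≠ 0`, `A` a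
partition of `V` into `k+1` nonempty parts and `f` the associated cochain (w.r.t. a
partition-adapted order).  Then there are unique (as cochains) `z ∈ Z_{k-1}(X;ℝ)` and
`b ∈ B^{k-1}(X;ℝ)` with `f = z + b`, and `λ(X)·⟨z,z⟩ ≤ |V|²·|F(A_0,…,A_k)|`. -/
theorem assocCochain_hodge_decomp
    {V : Type*} [DecidableEq V] [Fintype V] [LinearOrder V]
    (X : Finset (Finset V)) (k : ℕ)
    (hX : IsComplex X) (hdim : IsDim X k)
    (hZ : ∃ f : Finset V → ℝ, IsCycle X k f ∧ inn X k f f ≠ 0)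
    (A : Fin (k + 1) → Finset V) (hA : IsPartition A) (hord : OrderAdapted A) :
    ∃ z b : Finset V → ℝ, IsCycle X k z ∧ IsCobdry X k b ∧
      (∀ σ ∈ faces X k, assocCochain A σ = z σ + b σ) ∧
      (∀ z' b' : Finset V → ℝ, IsCycle X k z' → IsCobdry X k b' →
        (∀ σ ∈ faces X k, assocCochain A σ = z' σ + b' σ) →
        ∀ σ ∈ faces X k, z' σ = z σ ∧ b' σ = b σ) ∧
      spectralGap X k * inn X k z z
        ≤ (Fintype.card V : ℝ) ^ 2 * ((Fset X k A).card : ℝ) := by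
  classical
  set D := Dmap X k with hD
  set K : Submodule ℝ (EuclideanSpace ℝ ↥(faces X k)) := (LinearMap.range D)ᗮ with hK
  have hKorth : Kᗮ = LinearMap.range D := Submodule.orthogonal_orthogonal _
  obtain ⟨z₀, hz₀, b₀, hb₀, hfzb⟩ := Submodule.exists_add_mem_mem_orthogonal (K := K)
    (WithLp.toLp 2 (fun i : ↥(faces X k) => assocCochain A i.1))
  rw [hKorth] at hb₀
  obtain ⟨g₀, hg₀⟩ := hb₀
  set z := ext (faces X k) z₀ with hz
  set b := ext (faces X k) b₀ with hb
  have hcycz : IsCycle X k z := (mem_orthD_iff hX z₀).mp hz₀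
  have hcobb : IsCobdry X k b := by
    refine ⟨ext (faces X (k - 1)) g₀, fun σ hσ => ?_⟩
    rw [hb, ext_apply_of_mem _ _ hσ, ← hg₀]
    rfl
  have hdecomp : ∀ σ ∈ faces X k, assocCochain A σ = z σ + b σ := by
    intro σ hσ
    have h2 := congrArg (fun x : EuclideanSpace ℝ ↥(faces X k) => x ⟨σ, hσ⟩) hfzb
    rw [hz, hb, ext_apply_of_mem _ _ hσ, ext_apply_of_mem _ _ hσ]
    exact h2
  have huniq : ∀ z' b' : Finset V → ℝ, IsCycle X k z' → IsCobdry X k b' →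
      (∀ σ ∈ faces X k, assocCochain A σ = z' σ + b' σ) →
      ∀ σ ∈ faces X k, z' σ = z σ ∧ b' σ = b σ := by
    intro z' b' hc' hb' hdec σ hσ
    set rz' : EuclideanSpace ℝ ↥(faces X k) := WithLp.toLp 2 (fun i : ↥(faces X k) => z' i.1) with hrz'def
    set rb' : EuclideanSpace ℝ ↥(faces X k) := WithLp.toLp 2 (fun i : ↥(faces X k) => b' i.1) with hrb'def
    have hrz' : rz' ∈ K := by
      apply (mem_orthD_iff hX rz').mpr
      intro σ'
      rw [bdry_congr (g := z') (fun τ hτ => by rw [ext_apply_of_mem _ _ hτ]) σ']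
      exact hc' σ'
    have hrb' : rb' ∈ LinearMap.range D := by
      obtain ⟨g', hg'⟩ := hb'
      refine ⟨WithLp.toLp 2 (fun i : ↥(faces X (k - 1)) => g' i.1), ?_⟩
      apply WithLp.ofLp_injective 2
      funext i
      show delta X (k - 1) (ext (faces X (k - 1)) (WithLp.toLp 2 (fun i : ↥(faces X (k - 1)) => g' i.1))) i.1 = b' i.1
      rw [delta_congr (g := g') (fun ρ hρ => ext_apply_of_mem _ _ hρ) i.1]
      exact (hg' i.1 i.2).symm
    have hdiff : rz' - z₀ ∈ K := K.sub_mem hrz' hz₀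
    have hdiff2 : rz' - z₀ ∈ Kᗮ := by
      rw [hKorth]
      have heq : rz' - z₀ = b₀ - rb' := by
        have h1 : rz' + rb' = z₀ + b₀ := by
          rw [← hfzb]
          apply WithLp.ofLp_injective 2
          funext i
          show z' i.1 + b' i.1 = assocCochain A i.1
          exact (hdec i.1 i.2).symm
        rw [sub_eq_sub_iff_add_eq_add, h1]
        exact add_comm _ _
      rw [heq]
      exact Submodule.sub_mem _ ⟨g₀, hg₀⟩ hrb'
    have hz0 : rz' - z₀ = 0 := by
      have h0 : (inner ℝ (rz' - z₀) (rz' - z₀) : ℝ) = 0 :=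
        (Submodule.mem_orthogonal _ _).mp hdiff2 _ hdiff
      exact inner_self_eq_zero.mp h0
    have hrz_eq : rz' = z₀ := sub_eq_zero.mp hz0
    have hzeq : z' σ = z σ := by
      have := congrArg (fun x : EuclideanSpace ℝ ↥(faces X k) => x ⟨σ, hσ⟩) hrz_eq
      rw [hz, ext_apply_of_mem _ _ hσ]
      exact this
    refine ⟨hzeq, ?_⟩
    have h1 := hdec σ hσ
    have h2 := hdecomp σ hσ
    rw [h2, hzeq] at h1
    linarith
  -- spectral part
  set S : Set ℝ := {r : ℝ | ∃ f : Finset V → ℝ, IsCycle X k f ∧ inn X k f f ≠ 0 ∧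
    r = inn X k (lapUp X k f) f / inn X k f f} with hS
  have hgapS : spectralGap X k = sInf S := rfl
  have hlap : ∀ u : Finset V → ℝ, inn X k (lapUp X k u) u
      = ∑ τ ∈ faces X (k + 1), delta X k u τ * delta X k u τ :=
    fun u => inn_bdry_eq X (k + 1) k (delta X k u) u
  have hSnonneg : ∀ r ∈ S, 0 ≤ r := by
    rintro r ⟨u, hu1, hu2, rfl⟩
    apply div_nonneg
    · rw [hlap u]
      exact Finset.sum_nonneg fun τ _ => mul_self_nonneg _
    · exact inn_self_nonneg X k u
  have hSne : S.Nonempty := by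
    obtain ⟨u, h1, h2⟩ := hZ
    exact ⟨_, u, h1, h2, rfl⟩
  have hgap0 : 0 ≤ spectralGap X k := by
    rw [hgapS]
    exact le_csInf hSne hSnonneg
  have hdz : ∀ τ ∈ faces X (k + 1), delta X k z τ = delta X k (assocCochain A) τ := by
    intro τ hτ
    obtain ⟨hτX, hτc⟩ := mem_faces.mp hτ
    have h1 : delta X k (assocCochain A) τ = delta X k z τ + delta X k b τ := by
      rw [delta_congr (g := fun σ => z σ + b σ) hdecomp τ]
      unfold delta
      rw [← Finset.sum_add_distrib]
      exact Finset.sum_congr rfl fun σ _ => by ring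
    have h2 : delta X k b τ = 0 := by
      rw [delta_congr (g := delta X (k - 1) (ext (faces X (k - 1)) g₀))
        (fun σ hσ => by rw [hb, ext_apply_of_mem _ _ hσ, ← hg₀]; rfl) τ]
      exact delta_delta_zero hX hτX hτc _
    rw [h1, h2, add_zero]
  have hFset : (faces X (k + 1)).filter (fun τ => ∀ i, (τ ∩ A i).card = 1) = Fset X k A := by
    ext τ
    simp [Fset, Finset.mem_filter]
  have hbound : ∑ τ ∈ faces X (k + 1), delta X k z τ * delta X k z τ
      ≤ (Fintype.card V : ℝ) ^ 2 * ((Fset X k A).card : ℝ) := by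
    have heq : ∀ τ ∈ faces X (k + 1), delta X k z τ * delta X k z τ
        = (delta X k (assocCochain A) τ) ^ 2 := fun τ hτ => by rw [hdz τ hτ]; ring
    rw [Finset.sum_congr rfl heq,
      ← Finset.sum_filter_add_sum_filter_not (faces X (k + 1))
        (fun τ => ∀ i, (τ ∩ A i).card = 1)]
    have hzero : ∑ τ ∈ (faces X (k + 1)).filter (fun τ => ¬ ∀ i, (τ ∩ A i).card = 1),
        (delta X k (assocCochain A) τ) ^ 2 = 0 := by
      refine Finset.sum_eq_zero fun τ hτ => ?_
      obtain ⟨hτf, hτn⟩ := Finset.mem_filter.mp hτ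
      obtain ⟨hτX, hτc⟩ := mem_faces.mp hτf
      rw [delta_eq_sum hX hτX hτc, assoc_sum_zero hA hord hτc hτn]
      norm_num
    rw [hzero, add_zero]
    have hle : ∀ τ ∈ (faces X (k + 1)).filter (fun τ => ∀ i, (τ ∩ A i).card = 1),
        (delta X k (assocCochain A) τ) ^ 2 ≤ (Fintype.card V : ℝ) ^ 2 := by
      intro τ hτ
      obtain ⟨hτf, hτ1⟩ := Finset.mem_filter.mp hτ
      obtain ⟨hτX, hτc⟩ := mem_faces.mp hτf
      rw [delta_eq_sum hX hτX hτc]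
      calc (∑ v ∈ τ, (-1 : ℝ) ^ (τ.filter fun w => w < v).card
              * assocCochain A (τ.erase v)) ^ 2
          = |∑ v ∈ τ, (-1 : ℝ) ^ (τ.filter fun w => w < v).card
              * assocCochain A (τ.erase v)| ^ 2 := (sq_abs _).symm
        _ ≤ (Fintype.card V : ℝ) ^ 2 :=
            pow_le_pow_left₀ (abs_nonneg _) (assoc_sum_bound hA hτ1) 2
    calc ∑ τ ∈ (faces X (k + 1)).filter (fun τ => ∀ i, (τ ∩ A i).card = 1),
          (delta X k (assocCochain A) τ) ^ 2
        ≤ ((faces X (k + 1)).filter (fun τ => ∀ i, (τ ∩ A i).card = 1)).card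
            • ((Fintype.card V : ℝ) ^ 2) := Finset.sum_le_card_nsmul _ _ _ hle
      _ = (Fintype.card V : ℝ) ^ 2 * ((Fset X k A).card : ℝ) := by
          rw [hFset, nsmul_eq_mul]
          ring
  refine ⟨z, b, hcycz, hcobb, hdecomp, huniq, ?_⟩
  by_cases hzz : inn X k z z = 0
  · rw [hzz, mul_zero]
    exact mul_nonneg (sq_nonneg _) (Nat.cast_nonneg _)
  · have hzpos : 0 < inn X k z z := lt_of_le_of_ne (inn_self_nonneg X k z) (Ne.symm hzz)
    have hmem : inn X k (lapUp X k z) z / inn X k z z ∈ S := ⟨z, hcycz, hzz, rfl⟩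
    have hle2 : spectralGap X k ≤ inn X k (lapUp X k z) z / inn X k z z := by
      rw [hgapS]
      exact csInf_le ⟨0, fun r hr => hSnonneg r hr⟩ hmem
    have hfinal : spectralGap X k * inn X k z z ≤ inn X k (lapUp X k z) z := by
      have := mul_le_mul_of_nonneg_right hle2 (le_of_lt hzpos)
      rwa [div_mul_cancel₀ _ hzz] at this
    calc spectralGap X k * inn X k z z ≤ inn X k (lapUp X k z) z := hfinal
      _ = ∑ τ ∈ faces X (k + 1), delta X k z τ * delta X k z τ := hlap z
      _ ≤ _ := hbound

end HigherCheeger
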